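/- For every nonnegative integer m, the identity ∑_{k=0}^{m} (-1)^k * binom(m/2, k) * (1-b)^k = b^m * ∑_{k=0}^{m} binom(m/2, k) * (1-b)^k * b^{-k} holds for all real b ≠ 0, where binom(m/2, k) denotes the generalized binomial coefficient with real upper argument m/2. -/
import Mathlib
open Finset

/-- Generalized binomial coefficient `x(x-1)⋯(x-k+1)/k!` with real upper argument. -/
noncomputable def gchoose (x : ℝ) (k : ℕ) : ℝ :=
  (∏ i ∈ Finset.range k, (x - i)) / (Nat.factorial k)

lemma descPoch_smeval (x : ℝ) (k : ℕ) :
    Polynomial.smeval (descPochhammer ℤ k) x = ∏ i ∈ range k, (x - i) := by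
  induction k with
  | zero => simp [descPochhammer_zero]
  | succ n ih =>
    rw [descPochhammer_succ_right, Polynomial.smeval_mul, ih, prod_range_succ]
    congr 1
    simp [Polynomial.smeval_sub, Polynomial.smeval_X, Polynomial.smeval_natCast]

lemma gchoose_eq (x : ℝ) (k : ℕ) : gchoose x k = Ring.choose x k := by
  have h := Ring.descPochhammer_eq_factorial_smul_choose x k
  rw [descPoch_smeval, nsmul_eq_mul] at h
  have hk : (Nat.factorial k : ℝ) ≠ 0 := by exact_mod_cast Nat.factorial_ne_zero k
  rw [gchoose, h]
  field_simp

lemma gchoose_natCast (n k : ℕ) : gchoose (n : ℝ) k = n.choose k := by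
  rw [gchoose_eq, Ring.choose_natCast]

lemma gchoose_neg (x : ℝ) (k : ℕ) : gchoose ((k : ℝ) - 1 - x) k = (-1) ^ k * gchoose x k := by
  unfold gchoose
  rw [← mul_div_assoc]
  congr 1
  calc ∏ i ∈ range k, ((k : ℝ) - 1 - x - i)
      = ∏ i ∈ range k, (-1) * (x - ((k : ℝ) - 1 - i)) := prod_congr rfl (fun i _ => by ring)
    _ = (-1) ^ k * ∏ i ∈ range k, (x - ((k : ℝ) - 1 - i)) := by
        rw [prod_mul_distrib, prod_const, card_range]
    _ = (-1) ^ k * ∏ i ∈ range k, (x - i) := by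
        rw [← prod_range_reflect (fun j => x - (j : ℝ)) k]
        congr 1
        refine prod_congr rfl fun i hi => ?_
        rw [mem_range] at hi
        congr 1
        rw [Nat.cast_sub (by omega), Nat.cast_sub (by omega : 1 ≤ k)]
        push_cast; ring

lemma gchoose_vandermonde (x y : ℝ) (n : ℕ) :
    gchoose (x + y) n = ∑ k ∈ range (n + 1), gchoose x k * gchoose y (n - k) := by
  simp only [gchoose_eq]
  rw [Ring.add_choose_eq n (Commute.all _ _), Finset.Nat.sum_antidiagonal_eq_sum_range_succ_mk]

lemma inner_id (m n : ℕ) (hnm : n ≤ m) :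
    ∑ k ∈ range (n + 1), gchoose ((m : ℝ) / 2) k * ((m - k).choose (n - k) : ℝ) * (-1) ^ (n - k)
      = (-1) ^ n * gchoose ((m : ℝ) / 2) n := by
  have h1 : ∀ k ∈ range (n + 1),
      gchoose ((m : ℝ) / 2) k * ((m - k).choose (n - k) : ℝ) * (-1) ^ (n - k)
        = gchoose ((m : ℝ) / 2) k * gchoose ((n : ℝ) - m - 1) (n - k) := by
    intro k hk
    rw [mem_range] at hk
    have hkn : k ≤ n := by omega
    have h := gchoose_neg (((m - k : ℕ) : ℝ)) (n - k)
    rw [gchoose_natCast] at h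
    have hcast : ((n - k : ℕ) : ℝ) - 1 - ((m - k : ℕ) : ℝ) = (n : ℝ) - m - 1 := by
      rw [Nat.cast_sub hkn, Nat.cast_sub (by omega : k ≤ m)]; ring
    rw [hcast] at h
    rw [h]; ring
  rw [sum_congr rfl h1, ← gchoose_vandermonde]
  have h2 : (m : ℝ) / 2 + ((n : ℝ) - m - 1) = (n : ℝ) - 1 - (m : ℝ) / 2 := by ring
  rw [h2, gchoose_neg]

lemma key (m : ℕ) (u : ℝ) :
    ∑ k ∈ range (m + 1), gchoose ((m : ℝ) / 2) k * u ^ k * (1 - u) ^ (m - k)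
      = ∑ k ∈ range (m + 1), (-1 : ℝ) ^ k * gchoose ((m : ℝ) / 2) k * u ^ k := by
  set C : ℕ → ℝ := fun k => gchoose ((m : ℝ) / 2) k with hC
  have step1 : ∀ k ∈ range (m + 1),
      C k * u ^ k * (1 - u) ^ (m - k)
        = ∑ n ∈ Ico k (m + 1), C k * u ^ k * (-u) ^ (n - k) * ((m - k).choose (n - k) : ℝ) := by
    intro k hk
    rw [mem_range] at hk
    have hexp : (1 - u) ^ (m - k)
        = ∑ j ∈ range (m - k + 1), (-u) ^ j * ((m - k).choose j : ℝ) := by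
      rw [show (1 - u) = (-u) + 1 by ring, add_pow]
      simp
    rw [hexp, mul_sum, sum_Ico_eq_sum_range]
    have hrange : m + 1 - k = m - k + 1 := by omega
    rw [hrange]
    refine sum_congr rfl fun j hj => ?_
    rw [Nat.add_sub_cancel_left]
    ring
  rw [sum_congr rfl step1, range_eq_Ico, sum_Ico_Ico_comm]
  refine sum_congr rfl fun n hn => ?_
  rw [mem_Ico] at hn
  have hnm : n ≤ m := by omega
  rw [← range_eq_Ico]
  have h3 : ∀ k ∈ range (n + 1),
      C k * u ^ k * (-u) ^ (n - k) * ((m - k).choose (n - k) : ℝ)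
        = (C k * ((m - k).choose (n - k) : ℝ) * (-1) ^ (n - k)) * u ^ n := by
    intro k hk
    rw [mem_range] at hk
    have hu : u ^ k * u ^ (n - k) = u ^ n := by rw [← pow_add]; congr 1; omega
    calc C k * u ^ k * (-u) ^ (n - k) * ((m - k).choose (n - k) : ℝ)
        = (C k * ((m - k).choose (n - k) : ℝ) * (-1) ^ (n - k)) * (u ^ k * u ^ (n - k)) := by
          rw [neg_pow]; ring
      _ = _ := by rw [hu]
  rw [sum_congr rfl h3, ← sum_mul, inner_id m n hnm]

theorem stmt0 (m : ℕ) (b : ℝ) (hb : b ≠ 0) :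
    ∑ k ∈ Finset.range (m + 1), (-1 : ℝ) ^ k * gchoose ((m : ℝ) / 2) k * (1 - b) ^ k
      = b ^ m * ∑ k ∈ Finset.range (m + 1),
          gchoose ((m : ℝ) / 2) k * (1 - b) ^ k * b ^ (-(k : ℤ)) := by
  have hkey := key m (1 - b)
  rw [show (1 : ℝ) - (1 - b) = b by ring] at hkey
  rw [← hkey, mul_sum]
  refine sum_congr rfl fun k hk => ?_
  rw [mem_range] at hk
  have hbk : b ^ (-(k : ℤ)) = (b ^ k)⁻¹ := by rw [zpow_neg, zpow_natCast]
  have hpow : b ^ (m - k) * b ^ k = b ^ m := by rw [← pow_add]; congr 1; omega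
  rw [hbk]
  field_simp
  linear_combination gchoose ((m : ℝ) / 2) k * (1 - b) ^ k * hpow
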